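/- Let C₅ = ⟨g⟩ be cyclic of order 5, F = ⟨x⟩ free of rank 1, and consider the element r = x · (g x⁻¹ g⁻¹) · (g² x g⁻²) of the free product C₅ * F. Then r lies in the normal closure N of {x} in C₅ * F, and the image of r in ℤ[C₅] under the map sending a product of conjugates ∏ₖ gₖ x^{εₖ} gₖ⁻¹ (with gₖ ∈ C₅) to Σₖ εₖ gₖ equals 1 − g + g², which is a unit of ℤ[C₅]. -/

import Mathlib

/-- in `C₅ ∗ ⟨x⟩`, the element `r = x (g x⁻¹ g⁻¹) (g² x g⁻²)` lies in the
normal closure of `{x}`, is the product of conjugates with data `(1,1), (g,−1), (g²,1)`,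
and the associated group ring element `1 − g + g²` is a unit of `ℤ[C₅]`. -/
theorem example_C5_relator :
    let C₅ := Multiplicative (ZMod 5)
    let G := Monoid.Coprod C₅ (FreeGroup Unit)
    let x : G := Monoid.Coprod.inr (FreeGroup.of ())
    let g : G := Monoid.Coprod.inl (Multiplicative.ofAdd (1 : ZMod 5))
    let r : G := x * (g * x⁻¹ * g⁻¹) * (g ^ 2 * x * (g ^ 2)⁻¹)
    let gs : Fin 3 → C₅ :=
      ![1, Multiplicative.ofAdd (1 : ZMod 5), Multiplicative.ofAdd (2 : ZMod 5)]
    let εs : Fin 3 → ℤ := ![1, -1, 1]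
    let a : MonoidAlgebra ℤ C₅ := MonoidAlgebra.of ℤ C₅ (Multiplicative.ofAdd (1 : ZMod 5))
    r = (List.ofFn (fun k : Fin 3 =>
        Monoid.Coprod.inl (gs k) * x ^ (εs k) * (Monoid.Coprod.inl (gs k))⁻¹)).prod ∧
    r ∈ Subgroup.normalClosure {x} ∧
    (∑ k : Fin 3, MonoidAlgebra.single (gs k) (εs k)) = 1 - a + a ^ 2 ∧
    IsUnit (1 - a + a ^ 2) := by
  intro C₅ G x g r gs εs a
  have hg2 : g ^ 2 = Monoid.Coprod.inl (Multiplicative.ofAdd (2 : ZMod 5)) := by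
    show (Monoid.Coprod.inl (Multiplicative.ofAdd (1 : ZMod 5)) : G) ^ 2 = _
    rw [← map_pow]
    congr 1
  have ha : a = MonoidAlgebra.single (Multiplicative.ofAdd (1 : ZMod 5)) (1 : ℤ) := rfl
  have ha2 : a ^ 2 = MonoidAlgebra.single (Multiplicative.ofAdd (2 : ZMod 5)) (1 : ℤ) := by
    rw [ha, sq, MonoidAlgebra.single_mul_single]
    norm_num
    rfl
  have h5 : a ^ 5 = 1 := by
    rw [ha, MonoidAlgebra.single_pow]
    norm_num
    rfl
  refine ⟨?_, ?_, ?_, ?_⟩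
  · simp only [List.ofFn_succ, List.ofFn_zero, List.prod_cons, List.prod_nil, gs, εs,
      Matrix.cons_val_zero, Matrix.cons_val_one, Matrix.head_cons, Fin.succ_zero_eq_one,
      Fin.succ_one_eq_two, Matrix.cons_val_two, Matrix.tail_cons, map_one, one_mul,
      mul_one, zpow_one, zpow_neg, inv_one, r, hg2]
    rw [mul_assoc]
  · have hN := Subgroup.normalClosure_normal (s := ({x} : Set G))
    have hx : x ∈ Subgroup.normalClosure {x} :=
      Subgroup.subset_normalClosure rfl
    exact mul_mem (mul_mem hx (hN.conj_mem _ (inv_mem hx) g)) (hN.conj_mem _ hx (g ^ 2))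
  · rw [Fin.sum_univ_three]
    simp only [gs, εs, Matrix.cons_val_zero, Matrix.cons_val_one, Matrix.head_cons,
      Matrix.cons_val_two, Matrix.tail_cons]
    rw [ha2, ha]
    rw [show (MonoidAlgebra.single 1 (1 : ℤ) : MonoidAlgebra ℤ C₅) = 1 from rfl]
    rw [show (MonoidAlgebra.single (Multiplicative.ofAdd (1 : ZMod 5)) (-1 : ℤ) :
        MonoidAlgebra ℤ C₅) = -(MonoidAlgebra.single (Multiplicative.ofAdd (1 : ZMod 5)) (1 : ℤ))
        from MonoidAlgebra.single_neg _ _]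
    ring
  · refine IsUnit.of_mul_eq_one (a + a ^ 2 - a ^ 4) ?_
    linear_combination (1 - a) * h5
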